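/- There does not exist a set of 3 incomplete mutually orthogonal binary frequency squares of type (n; n-2), i.e., three n×n arrays with an empty (n-2)×(n-2) top-left subarray, {0,1} entries elsewhere, balanced rows and columns, and pairwise orthogonality. -/
import Mathlib


/-- An incomplete binary frequency square of type (n; n-2): an n×n array
whose top-left (n-2)×(n-2) subarray is empty (its values are irrelevant),
all other cells contain 0 or 1, and every row and every column contains
equally many zeros and ones among its filled cells. -/
def IsIncFS (n : ℕ) (F : Fin n → Fin n → Fin 2) : Prop :=
  (∀ r : Fin n,
    (Finset.univ.filter fun c : Fin n =>
      ¬((r : ℕ) < n - 2 ∧ (c : ℕ) < n - 2) ∧ F r c = 0).card =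
    (Finset.univ.filter fun c : Fin n =>
      ¬((r : ℕ) < n - 2 ∧ (c : ℕ) < n - 2) ∧ F r c = 1).card) ∧
  (∀ c : Fin n,
    (Finset.univ.filter fun r : Fin n =>
      ¬((r : ℕ) < n - 2 ∧ (c : ℕ) < n - 2) ∧ F r c = 0).card =
    (Finset.univ.filter fun r : Fin n =>
      ¬((r : ℕ) < n - 2 ∧ (c : ℕ) < n - 2) ∧ F r c = 1).card)

/-- Two incomplete frequency squares of type (n; n-2) are orthogonal if each
of the four ordered pairs of symbols occurs equally often over the filled
cells of their superposition. -/
def IncOrth (n : ℕ) (F G : Fin n → Fin n → Fin 2) : Prop :=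
  ∀ a b a' b' : Fin 2,
    (Finset.univ.filter fun p : Fin n × Fin n =>
      ¬((p.1 : ℕ) < n - 2 ∧ (p.2 : ℕ) < n - 2) ∧
        F p.1 p.2 = a ∧ G p.1 p.2 = b).card =
    (Finset.univ.filter fun p : Fin n × Fin n =>
      ¬((p.1 : ℕ) < n - 2 ∧ (p.2 : ℕ) < n - 2) ∧
        F p.1 p.2 = a' ∧ G p.1 p.2 = b').card

namespace Stmt18Aux

def ent {n : ℕ} (F : Fin n → Fin n → Fin 2) (i j : ℕ) : ℤ :=
  if h : i < n ∧ j < n then 1 - 2 * ((F ⟨i, h.1⟩ ⟨j, h.2⟩ : Fin 2) : ℕ) else 0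

lemma ent_val {n : ℕ} (F : Fin n → Fin n → Fin 2) (i j : Fin n) :
    ent F i.val j.val = 1 - 2 * ((F i j : ℕ) : ℤ) := by
  rw [ent, dif_pos ⟨i.isLt, j.isLt⟩]

lemma ent_pm {n : ℕ} (F : Fin n → Fin n → Fin 2) {i j : ℕ} (hi : i < n) (hj : j < n) :
    ent F i j = 1 ∨ ent F i j = -1 := by
  rw [ent, dif_pos ⟨hi, hj⟩]
  have := (F ⟨i, hi⟩ ⟨j, hj⟩).isLt
  omega

lemma fin2_cases (x : Fin 2) : x = 0 ∨ x = 1 := by omega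

lemma split_range (m : ℕ) (φ : ℕ → ℤ) :
    ∑ j ∈ Finset.range (m+2), φ j = (∑ j ∈ Finset.range m, φ j) + φ m + φ (m+1) := by
  rw [Finset.sum_range_succ, Finset.sum_range_succ]

lemma row_sum_zero {n : ℕ} (F : Fin n → Fin n → Fin 2) (hF : IsIncFS n F)
    (i : ℕ) (hi : i < n) :
    ∑ j ∈ Finset.range n, (if ¬(i < n - 2 ∧ j < n - 2) then ent F i j else 0) = 0 := by
  have h := hF.1 ⟨i, hi⟩
  have key : ∀ c : Fin n,
      (if ¬(i < n-2 ∧ (c : ℕ) < n-2) then ent F i c.val else 0 : ℤ)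
      = (if ¬(((⟨i,hi⟩ : Fin n) : ℕ) < n-2 ∧ (c:ℕ) < n-2) ∧ F ⟨i,hi⟩ c = 0 then 1 else 0)
        - (if ¬(((⟨i,hi⟩ : Fin n) : ℕ) < n-2 ∧ (c:ℕ) < n-2) ∧ F ⟨i,hi⟩ c = 1 then 1 else 0) := by
    intro c
    have hv : ent F i c.val = 1 - 2 * ((F ⟨i,hi⟩ c : ℕ) : ℤ) := ent_val F ⟨i,hi⟩ c
    by_cases hc : i < n-2 ∧ (c : ℕ) < n-2
    · simp [hc]
    · rcases fin2_cases (F ⟨i,hi⟩ c) with h0 | h0 <;> simp [hc, h0, hv]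
  calc ∑ j ∈ Finset.range n, (if ¬(i < n - 2 ∧ j < n - 2) then ent F i j else 0)
      = ∑ c : Fin n, (if ¬(i < n-2 ∧ (c:ℕ) < n-2) then ent F i c.val else 0 : ℤ) :=
        (Fin.sum_univ_eq_sum_range (fun j => if ¬(i < n - 2 ∧ j < n - 2) then ent F i j else 0) n).symm
    _ = ∑ c : Fin n, ((if ¬(((⟨i,hi⟩ : Fin n) : ℕ) < n-2 ∧ (c:ℕ) < n-2) ∧ F ⟨i,hi⟩ c = 0 then 1 else 0)
        - (if ¬(((⟨i,hi⟩ : Fin n) : ℕ) < n-2 ∧ (c:ℕ) < n-2) ∧ F ⟨i,hi⟩ c = 1 then (1:ℤ) else 0)) :=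
        Finset.sum_congr rfl fun c _ => key c
    _ = 0 := by
        rw [Finset.sum_sub_distrib]
        simp only [Finset.sum_boole]
        rw [h]
        ring

lemma col_sum_zero {n : ℕ} (F : Fin n → Fin n → Fin 2) (hF : IsIncFS n F)
    (j : ℕ) (hj : j < n) :
    ∑ i ∈ Finset.range n, (if ¬(i < n - 2 ∧ j < n - 2) then ent F i j else 0) = 0 := by
  have h := hF.2 ⟨j, hj⟩
  have key : ∀ c : Fin n,
      (if ¬((c : ℕ) < n-2 ∧ j < n-2) then ent F c.val j else 0 : ℤ)
      = (if ¬((c:ℕ) < n-2 ∧ ((⟨j,hj⟩ : Fin n) : ℕ) < n-2) ∧ F c ⟨j,hj⟩ = 0 then 1 else 0)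
        - (if ¬((c:ℕ) < n-2 ∧ ((⟨j,hj⟩ : Fin n) : ℕ) < n-2) ∧ F c ⟨j,hj⟩ = 1 then 1 else 0) := by
    intro c
    have hv : ent F c.val j = 1 - 2 * ((F c ⟨j,hj⟩ : ℕ) : ℤ) := ent_val F c ⟨j,hj⟩
    by_cases hc : (c : ℕ) < n-2 ∧ j < n-2
    · simp [hc]
    · rcases fin2_cases (F c ⟨j,hj⟩) with h0 | h0 <;> simp [hc, h0, hv]
  calc ∑ i ∈ Finset.range n, (if ¬(i < n - 2 ∧ j < n - 2) then ent F i j else 0)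
      = ∑ c : Fin n, (if ¬((c:ℕ) < n-2 ∧ j < n-2) then ent F c.val j else 0 : ℤ) :=
        (Fin.sum_univ_eq_sum_range (fun i => if ¬(i < n - 2 ∧ j < n - 2) then ent F i j else 0) n).symm
    _ = ∑ c : Fin n, ((if ¬((c:ℕ) < n-2 ∧ ((⟨j,hj⟩ : Fin n) : ℕ) < n-2) ∧ F c ⟨j,hj⟩ = 0 then 1 else 0)
        - (if ¬((c:ℕ) < n-2 ∧ ((⟨j,hj⟩ : Fin n) : ℕ) < n-2) ∧ F c ⟨j,hj⟩ = 1 then (1:ℤ) else 0)) :=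
        Finset.sum_congr rfl fun c _ => key c
    _ = 0 := by
        rw [Finset.sum_sub_distrib]
        simp only [Finset.sum_boole]
        rw [h]
        ring


lemma shortrow {n m : ℕ} (hm : n = m + 2) (F : Fin n → Fin n → Fin 2) (hF : IsIncFS n F)
    (i : ℕ) (hi : i < m) : ent F i m + ent F i (m+1) = 0 := by
  have h := row_sum_zero F hF i (by omega)
  have hn2 : n - 2 = m := by omega
  rw [hn2, show Finset.range n = Finset.range (m+2) from by rw [hm],
    split_range m (fun j => if ¬(i < m ∧ j < m) then ent F i j else 0)] at h
  rw [if_pos (by omega : ¬(i < m ∧ m < m)), if_pos (by omega : ¬(i < m ∧ m + 1 < m)),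
    Finset.sum_eq_zero (fun j hj => by
      rw [if_neg (not_not_intro ⟨hi, Finset.mem_range.1 hj⟩)])] at h
  linarith

lemma shortcol {n m : ℕ} (hm : n = m + 2) (F : Fin n → Fin n → Fin 2) (hF : IsIncFS n F)
    (j : ℕ) (hj : j < m) : ent F m j + ent F (m+1) j = 0 := by
  have h := col_sum_zero F hF j (by omega)
  have hn2 : n - 2 = m := by omega
  rw [hn2, show Finset.range n = Finset.range (m+2) from by rw [hm],
    split_range m (fun i => if ¬(i < m ∧ j < m) then ent F i j else 0)] at h
  rw [if_pos (by omega : ¬(m < m ∧ j < m)), if_pos (by omega : ¬(m + 1 < m ∧ j < m)),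
    Finset.sum_eq_zero (fun i hi => by
      rw [if_neg (not_not_intro ⟨Finset.mem_range.1 hi, hj⟩)])] at h
  linarith

lemma rowm {n m : ℕ} (hm : n = m + 2) (F : Fin n → Fin n → Fin 2) (hF : IsIncFS n F) :
    (∑ j ∈ Finset.range m, ent F m j) + ent F m m + ent F m (m+1) = 0 := by
  have h := row_sum_zero F hF m (by omega)
  have hn2 : n - 2 = m := by omega
  rw [hn2, show Finset.range n = Finset.range (m+2) from by rw [hm],
    split_range m (fun j => if ¬(m < m ∧ j < m) then ent F m j else 0)] at h
  rw [if_pos (by omega : ¬(m < m ∧ m < m)), if_pos (by omega : ¬(m < m ∧ m + 1 < m)),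
    Finset.sum_congr rfl (fun j _ => if_pos (by omega : ¬(m < m ∧ j < m)))] at h
  linarith

lemma rowm1 {n m : ℕ} (hm : n = m + 2) (F : Fin n → Fin n → Fin 2) (hF : IsIncFS n F) :
    (∑ j ∈ Finset.range m, ent F (m+1) j) + ent F (m+1) m + ent F (m+1) (m+1) = 0 := by
  have h := row_sum_zero F hF (m+1) (by omega)
  have hn2 : n - 2 = m := by omega
  rw [hn2, show Finset.range n = Finset.range (m+2) from by rw [hm],
    split_range m (fun j => if ¬(m+1 < m ∧ j < m) then ent F (m+1) j else 0)] at h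
  rw [if_pos (by omega : ¬(m+1 < m ∧ m < m)), if_pos (by omega : ¬(m+1 < m ∧ m + 1 < m)),
    Finset.sum_congr rfl (fun j _ => if_pos (by omega : ¬(m+1 < m ∧ j < m)))] at h
  linarith

lemma colm {n m : ℕ} (hm : n = m + 2) (F : Fin n → Fin n → Fin 2) (hF : IsIncFS n F) :
    (∑ i ∈ Finset.range m, ent F i m) + ent F m m + ent F (m+1) m = 0 := by
  have h := col_sum_zero F hF m (by omega)
  have hn2 : n - 2 = m := by omega
  rw [hn2, show Finset.range n = Finset.range (m+2) from by rw [hm],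
    split_range m (fun i => if ¬(i < m ∧ m < m) then ent F i m else 0)] at h
  rw [if_pos (by omega : ¬(m < m ∧ m < m)), if_pos (by omega : ¬(m+1 < m ∧ m < m)),
    Finset.sum_congr rfl (fun i _ => if_pos (by omega : ¬(i < m ∧ m < m)))] at h
  linarith

lemma colm1 {n m : ℕ} (hm : n = m + 2) (F : Fin n → Fin n → Fin 2) (hF : IsIncFS n F) :
    (∑ i ∈ Finset.range m, ent F i (m+1)) + ent F m (m+1) + ent F (m+1) (m+1) = 0 := by
  have h := col_sum_zero F hF (m+1) (by omega)
  have hn2 : n - 2 = m := by omega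
  rw [hn2, show Finset.range n = Finset.range (m+2) from by rw [hm],
    split_range m (fun i => if ¬(i < m ∧ m+1 < m) then ent F i (m+1) else 0)] at h
  rw [if_pos (by omega : ¬(m < m ∧ m+1 < m)), if_pos (by omega : ¬(m+1 < m ∧ m+1 < m)),
    Finset.sum_congr rfl (fun i _ => if_pos (by omega : ¬(i < m ∧ m+1 < m)))] at h
  linarith


lemma blockV {n m : ℕ} (hm : n = m + 2) (F : Fin n → Fin n → Fin 2) (hF : IsIncFS n F) :
    ent F m m + ent F m (m+1) = ∑ j ∈ Finset.range m, ent F (m+1) j := by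
  have h := rowm hm F hF
  have e : ∑ j ∈ Finset.range m, ent F m j = ∑ j ∈ Finset.range m, (- ent F (m+1) j) :=
    Finset.sum_congr rfl fun j hj => by
      have := shortcol hm F hF j (Finset.mem_range.1 hj); linarith
  rw [e, Finset.sum_neg_distrib] at h
  linarith

lemma blockU {n m : ℕ} (hm : n = m + 2) (F : Fin n → Fin n → Fin 2) (hF : IsIncFS n F) :
    ent F m m + ent F (m+1) m = ∑ i ∈ Finset.range m, ent F i (m+1) := by
  have h := colm hm F hF
  have e : ∑ i ∈ Finset.range m, ent F i m = ∑ i ∈ Finset.range m, (- ent F i (m+1)) :=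
    Finset.sum_congr rfl fun i hi => by
      have := shortrow hm F hF i (Finset.mem_range.1 hi); linarith
  rw [e, Finset.sum_neg_distrib] at h
  linarith

lemma blocksum {n m : ℕ} (hm : n = m + 2) (F : Fin n → Fin n → Fin 2) (hF : IsIncFS n F) :
    ent F m m + ent F m (m+1) + ent F (m+1) m + ent F (m+1) (m+1) = 0 := by
  have h1 := rowm hm F hF
  have h2 := rowm1 hm F hF
  have hz : ∑ j ∈ Finset.range m, (ent F m j + ent F (m+1) j) = 0 :=
    Finset.sum_eq_zero fun j hj => shortcol hm F hF j (Finset.mem_range.1 hj)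
  rw [Finset.sum_add_distrib] at hz
  linarith

lemma inner_dvd (s : Finset ℕ) (u v : ℕ → ℤ)
    (hu : ∀ i ∈ s, u i = 1 ∨ u i = -1) (hv : ∀ i ∈ s, v i = 1 ∨ v i = -1) :
    (4:ℤ) ∣ (∑ i ∈ s, u i * v i) - ((∑ i ∈ s, u i) + (∑ i ∈ s, v i) - s.card) := by
  have e : (∑ i ∈ s, u i * v i) - ((∑ i ∈ s, u i) + (∑ i ∈ s, v i) - s.card)
      = ∑ i ∈ s, (u i - 1) * (v i - 1) := by
    have e2 : ∀ i ∈ s, (u i - 1) * (v i - 1) = u i * v i - u i - v i + 1 := fun i _ => by ring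
    rw [Finset.sum_congr rfl e2]
    simp only [Finset.sum_add_distrib, Finset.sum_sub_distrib, Finset.sum_const, smul_eq_mul,
      mul_one]
    ring
  rw [e]
  exact Finset.dvd_sum fun i hi => by
    rcases hu i hi with h | h <;> rcases hv i hi with h' | h' <;> rw [h, h'] <;> norm_num


lemma orth_sum_zero {n : ℕ} (F G : Fin n → Fin n → Fin 2) (hFG : IncOrth n F G) :
    ∑ i ∈ Finset.range n, ∑ j ∈ Finset.range n,
      (if ¬(i < n-2 ∧ j < n-2) then ent F i j * ent G i j else 0) = 0 := by
  have h1 := hFG 0 0 0 1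
  have h2 := hFG 1 1 1 0
  have main : ∑ p : Fin n × Fin n,
      (if ¬((p.1:ℕ) < n-2 ∧ (p.2:ℕ) < n-2) then ent F p.1.val p.2.val * ent G p.1.val p.2.val else 0 : ℤ) = 0 := by
    have key : ∀ p : Fin n × Fin n,
      (if ¬((p.1:ℕ) < n-2 ∧ (p.2:ℕ) < n-2) then ent F p.1.val p.2.val * ent G p.1.val p.2.val else 0 : ℤ)
      = ((if ¬((p.1:ℕ) < n-2 ∧ (p.2:ℕ) < n-2) ∧ F p.1 p.2 = 0 ∧ G p.1 p.2 = 0 then 1 else 0)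
         - (if ¬((p.1:ℕ) < n-2 ∧ (p.2:ℕ) < n-2) ∧ F p.1 p.2 = 0 ∧ G p.1 p.2 = 1 then 1 else 0))
        + ((if ¬((p.1:ℕ) < n-2 ∧ (p.2:ℕ) < n-2) ∧ F p.1 p.2 = 1 ∧ G p.1 p.2 = 1 then 1 else 0)
         - (if ¬((p.1:ℕ) < n-2 ∧ (p.2:ℕ) < n-2) ∧ F p.1 p.2 = 1 ∧ G p.1 p.2 = 0 then 1 else 0)) := by
      intro p
      have hvF := ent_val F p.1 p.2
      have hvG := ent_val G p.1 p.2
      by_cases hc : (p.1:ℕ) < n-2 ∧ (p.2:ℕ) < n-2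
      · simp [hc]
      · rcases fin2_cases (F p.1 p.2) with h0|h0 <;> rcases fin2_cases (G p.1 p.2) with h3|h3 <;>
          simp [hc, h0, h3, hvF, hvG]
    rw [Finset.sum_congr rfl fun p _ => key p, Finset.sum_add_distrib,
      Finset.sum_sub_distrib, Finset.sum_sub_distrib]
    simp only [Finset.sum_boole]
    rw [h1, h2]
    ring
  rw [Fintype.sum_prod_type] at main
  have e1 : ∀ i : Fin n,
      (∑ j : Fin n, (if ¬((i:ℕ) < n-2 ∧ (j:ℕ) < n-2) then ent F i.val j.val * ent G i.val j.val else 0 : ℤ))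
      = ∑ j ∈ Finset.range n, (if ¬((i:ℕ) < n-2 ∧ j < n-2) then ent F i.val j * ent G i.val j else 0) :=
    fun i => Fin.sum_univ_eq_sum_range
      (fun j => if ¬((i:ℕ) < n-2 ∧ j < n-2) then ent F i.val j * ent G i.val j else 0) n
  rw [Finset.sum_congr rfl fun i _ => e1 i] at main
  rw [Fin.sum_univ_eq_sum_range
    (fun i => ∑ j ∈ Finset.range n, (if ¬(i < n-2 ∧ j < n-2) then ent F i j * ent G i j else 0)) n] at main
  exact main


lemma pairLemma (a b g d a' b' g' d' : ℤ)
    (ha : a = 1 ∨ a = -1) (hb : b = 1 ∨ b = -1) (hg : g = 1 ∨ g = -1) (hd : d = 1 ∨ d = -1)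
    (ha' : a' = 1 ∨ a' = -1) (hb' : b' = 1 ∨ b' = -1) (hg' : g' = 1 ∨ g' = -1)
    (hd' : d' = 1 ∨ d' = -1)
    (h1 : a + b + g + d = 0) (h2 : a' + b' + g' + d' = 0)
    (hdvd : (8:ℤ) ∣ (a*a' + b*b' + g*g' + d*d') + 2*((a+g) + (a'+g') + (a+b) + (a'+b'))) :
    (a+g = 0 ∧ a+b ≠ 0 ∧ a'+g' ≠ 0 ∧ a'+b' = 0) ∨
    (a+g ≠ 0 ∧ a+b = 0 ∧ a'+g' = 0 ∧ a'+b' ≠ 0) := by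
  rcases ha with rfl|rfl <;> rcases hb with rfl|rfl <;> rcases hg with rfl|rfl <;>
    rcases hd with rfl|rfl <;> rcases ha' with rfl|rfl <;> rcases hb' with rfl|rfl <;>
    rcases hg' with rfl|rfl <;> rcases hd' with rfl|rfl <;> omega

lemma pair_types {n m : ℕ} (hm : n = m + 2) (hme : Even m)
    (F G : Fin n → Fin n → Fin 2) (hF : IsIncFS n F) (hG : IsIncFS n G)
    (hFG : IncOrth n F G) :
    ((ent F m m + ent F (m+1) m = 0 ∧ ent F m m + ent F m (m+1) ≠ 0 ∧
      ent G m m + ent G (m+1) m ≠ 0 ∧ ent G m m + ent G m (m+1) = 0) ∨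
     (ent F m m + ent F (m+1) m ≠ 0 ∧ ent F m m + ent F m (m+1) = 0 ∧
      ent G m m + ent G (m+1) m = 0 ∧ ent G m m + ent G m (m+1) ≠ 0)) := by
  have hn2 : n - 2 = m := by omega
  have hmn : m < n := by omega
  have hm1n : m + 1 < n := by omega
  have horth := orth_sum_zero F G hFG
  rw [hn2, show Finset.range n = Finset.range (m+2) from by rw [hm],
    split_range m (fun i => ∑ j ∈ Finset.range (m+2),
      (if ¬(i < m ∧ j < m) then ent F i j * ent G i j else 0))] at horth
  -- short rows
  have hrow_short : ∀ i ∈ Finset.range m,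
      (∑ j ∈ Finset.range (m+2), (if ¬(i < m ∧ j < m) then ent F i j * ent G i j else 0))
      = 2 * (ent F i (m+1) * ent G i (m+1)) := by
    intro i hi
    have hi' := Finset.mem_range.1 hi
    rw [split_range m (fun j => if ¬(i < m ∧ j < m) then ent F i j * ent G i j else 0),
      if_pos (by omega : ¬(i < m ∧ m < m)), if_pos (by omega : ¬(i < m ∧ m + 1 < m)),
      Finset.sum_eq_zero (fun j hj => by
        rw [if_neg (not_not_intro ⟨hi', Finset.mem_range.1 hj⟩)])]
    have eF : ent F i m = - ent F i (m+1) := by have := shortrow hm F hF i hi'; linarith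
    have eG : ent G i m = - ent G i (m+1) := by have := shortrow hm G hG i hi'; linarith
    rw [eF, eG]; ring
  rw [Finset.sum_congr rfl hrow_short] at horth
  -- row m
  have hrow_m :
      (∑ j ∈ Finset.range (m+2), (if ¬(m < m ∧ j < m) then ent F m j * ent G m j else 0))
      = (∑ j ∈ Finset.range m, ent F (m+1) j * ent G (m+1) j)
        + ent F m m * ent G m m + ent F m (m+1) * ent G m (m+1) := by
    rw [split_range m (fun j => if ¬(m < m ∧ j < m) then ent F m j * ent G m j else 0),
      if_pos (by omega : ¬(m < m ∧ m < m)), if_pos (by omega : ¬(m < m ∧ m + 1 < m))]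
    have e : ∑ j ∈ Finset.range m, (if ¬(m < m ∧ j < m) then ent F m j * ent G m j else 0)
        = ∑ j ∈ Finset.range m, ent F (m+1) j * ent G (m+1) j := by
      refine Finset.sum_congr rfl fun j hj => ?_
      rw [if_pos (by omega : ¬(m < m ∧ j < m))]
      have hj' := Finset.mem_range.1 hj
      have eF : ent F m j = - ent F (m+1) j := by have := shortcol hm F hF j hj'; linarith
      have eG : ent G m j = - ent G (m+1) j := by have := shortcol hm G hG j hj'; linarith
      rw [eF, eG]
      ring
    rw [e]
  rw [hrow_m] at horth
  -- row m+1
  have hrow_m1 :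
      (∑ j ∈ Finset.range (m+2), (if ¬(m+1 < m ∧ j < m) then ent F (m+1) j * ent G (m+1) j else 0))
      = (∑ j ∈ Finset.range m, ent F (m+1) j * ent G (m+1) j)
        + ent F (m+1) m * ent G (m+1) m + ent F (m+1) (m+1) * ent G (m+1) (m+1) := by
    rw [split_range m (fun j => if ¬(m+1 < m ∧ j < m) then ent F (m+1) j * ent G (m+1) j else 0),
      if_pos (by omega : ¬(m+1 < m ∧ m < m)), if_pos (by omega : ¬(m+1 < m ∧ m + 1 < m)),
      Finset.sum_congr rfl (fun j _ => if_pos (by omega : ¬(m+1 < m ∧ j < m)))]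
  rw [hrow_m1] at horth
  rw [← Finset.mul_sum] at horth
  -- now horth :
  -- 2 * Su + (Sw + αα' + ββ') + (Sw + γγ' + δδ') = 0
  obtain ⟨a, ha⟩ := inner_dvd (Finset.range m) (fun i => ent F i (m+1)) (fun i => ent G i (m+1))
    (fun i hi => ent_pm F (by have := Finset.mem_range.1 hi; omega) hm1n)
    (fun i hi => ent_pm G (by have := Finset.mem_range.1 hi; omega) hm1n)
  obtain ⟨b, hb⟩ := inner_dvd (Finset.range m) (fun j => ent F (m+1) j) (fun j => ent G (m+1) j)
    (fun j hj => ent_pm F hm1n (by have := Finset.mem_range.1 hj; omega))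
    (fun j hj => ent_pm G hm1n (by have := Finset.mem_range.1 hj; omega))
  rw [Finset.card_range] at ha hb
  have hUF := blockU hm F hF
  have hUG := blockU hm G hG
  have hVF := blockV hm F hF
  have hVG := blockV hm G hG
  obtain ⟨c, hc⟩ := hme
  have hcz : (m : ℤ) = c + c := by exact_mod_cast hc
  have hdvd : (8:ℤ) ∣ (ent F m m * ent G m m + ent F m (m+1) * ent G m (m+1)
      + ent F (m+1) m * ent G (m+1) m + ent F (m+1) (m+1) * ent G (m+1) (m+1))
      + 2*((ent F m m + ent F (m+1) m) + (ent G m m + ent G (m+1) m)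
        + (ent F m m + ent F m (m+1)) + (ent G m m + ent G m (m+1))) := by
    refine ⟨(c : ℤ) - a - b, ?_⟩
    rw [hUF, hUG, hVF, hVG]
    linarith
  exact pairLemma _ _ _ _ _ _ _ _
    (ent_pm F hmn hmn) (ent_pm F hmn hm1n) (ent_pm F hm1n hmn) (ent_pm F hm1n hm1n)
    (ent_pm G hmn hmn) (ent_pm G hmn hm1n) (ent_pm G hm1n hmn) (ent_pm G hm1n hm1n)
    (blocksum hm F hF) (blocksum hm G hG) hdvd

end Stmt18Aux

/-- There is no set of 3 pairwise orthogonal incomplete binary frequency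
squares of type (n; n-2). -/
theorem stmt_18 (n : ℕ) (hn : 4 ≤ n) (hne : Even n) :
    ¬ ∃ F G H : Fin n → Fin n → Fin 2,
        IsIncFS n F ∧ IsIncFS n G ∧ IsIncFS n H ∧
        IncOrth n F G ∧ IncOrth n F H ∧ IncOrth n G H := by
  rintro ⟨F, G, H, hF, hG, hH, hFG, hFH, hGH⟩
  have hm : n = (n - 2) + 2 := by omega
  have hme : Even (n - 2) := by
    obtain ⟨k, hk⟩ := hne
    exact ⟨k - 1, by omega⟩
  have p1 := Stmt18Aux.pair_types hm hme F G hF hG hFG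
  have p2 := Stmt18Aux.pair_types hm hme F H hF hH hFH
  have p3 := Stmt18Aux.pair_types hm hme G H hG hH hGH
  tauto
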